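/- arXiv:1703.07942 — 2 statements merged into one kernel-verified Lean document; each statement's English description precedes it below -/
import Mathlib

section
/- Let φ(u) = Σ_{i=1}^m d_i (x̂*_i e^{u_i} − x̂_{0,i} u_i) with d_i > 0 and x̂^*, x̂_0 ∈ R^m_{>0}, and let U ⊆ R^m be a linear subspace. Then there exists a unique μ ∈ U such that the gradient ∇φ(μ) = D_1(x̂^*·Exp(μ) − x̂_0) is orthogonal to U (equivalently, lies in the orthogonal complement of U). -/
open Filter Topology

/-- Pointwise coercivity bound: `a e^t - b t ≥ min b 1 * |t| - (b+1)²/a`. -/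
private lemma aux_exp_lb (a b t : ℝ) (ha : 0 < a) (hb : 0 < b) :
    min b 1 * |t| - (b + 1) ^ 2 / a ≤ a * Real.exp t - b * t := by
  have hC : 0 ≤ (b + 1) ^ 2 / a := by positivity
  rcases le_or_gt t 0 with ht | ht
  · rw [abs_of_nonpos ht]
    have h1 : min b 1 ≤ b := min_le_left _ _
    have h2 := Real.exp_pos t
    nlinarith [mul_le_mul_of_nonneg_right h1 (neg_nonneg.mpr ht)]
  · rw [abs_of_pos ht]
    have h1 : min b 1 ≤ 1 := min_le_right _ _
    have he : Real.exp t = Real.exp (t / 2) * Real.exp (t / 2) := by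
      rw [← Real.exp_add]; ring_nf
    have h2 : 1 + t / 2 ≤ Real.exp (t / 2) := by
      have := Real.add_one_le_exp (t / 2); linarith
    have key : t ^ 2 / 4 ≤ Real.exp t := by nlinarith
    have h6 : (b + 1) ^ 2 / a * a = (b + 1) ^ 2 := div_mul_cancel₀ _ ha.ne'
    have h7 : a * t - (b + 1) ^ 2 ≤ a * (a * Real.exp t - b * t) := by
      nlinarith [sq_nonneg (a * t / 2 - (b + 1)),
        mul_le_mul_of_nonneg_left key (by positivity : (0:ℝ) ≤ a ^ 2)]
    nlinarith [mul_le_mul_of_nonneg_right h1 ht.le, ha]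

/-- For `φ(u) = ∑ᵢ dᵢ (x̂*ᵢ e^{uᵢ} − x̂₀ᵢ uᵢ)` and a linear subspace `U ⊆ ℝᵐ`,
there is a unique `μ ∈ U` such that the gradient
`∇φ(μ) = D₁(x̂*·Exp(μ) − x̂₀)` is orthogonal to `U`. -/
theorem phi_unique_critical_point_on_subspace
    (m : ℕ) (hm : 1 ≤ m) (xs x0 d : Fin m → ℝ)
    (hxs : ∀ i, 0 < xs i) (hx0 : ∀ i, 0 < x0 i) (hd : ∀ i, 0 < d i)
    (U : Submodule ℝ (Fin m → ℝ)) :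
    ∃! μ : Fin m → ℝ, μ ∈ U ∧
      ∀ w ∈ U, ∑ i, (d i * (xs i * Real.exp (μ i) - x0 i)) * w i = 0 := by
  classical
  haveI : NeZero m := ⟨by omega⟩
  set φ : (Fin m → ℝ) → ℝ :=
    fun u => ∑ i, d i * (xs i * Real.exp (u i) - x0 i * u i) with hφ
  have hφcont : Continuous φ := by
    apply continuous_finset_sum
    intro i _
    exact continuous_const.mul (((continuous_const.mul
      (Real.continuous_exp.comp (continuous_apply i)))).sub
      (continuous_const.mul (continuous_apply i)))
  -- coercivity
  set c : ℝ := Finset.univ.inf' (Finset.univ_nonempty) (fun i => min (d i * x0 i) 1) with hc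
  have hcpos : 0 < c := by
    apply Finset.lt_inf'_iff _ |>.mpr
    intro i _
    exact lt_min (mul_pos (hd i) (hx0 i)) one_pos
  set C : ℝ := ∑ i, (d i * x0 i + 1) ^ 2 / (d i * xs i) with hC
  have hbound : ∀ u, c * ‖u‖ - C ≤ φ u := by
    intro u
    have h1 : ∀ i, min (d i * x0 i) 1 * |u i| - (d i * x0 i + 1) ^ 2 / (d i * xs i)
        ≤ d i * (xs i * Real.exp (u i) - x0 i * u i) := by
      intro i
      have := aux_exp_lb (d i * xs i) (d i * x0 i) (u i) (mul_pos (hd i) (hxs i)) (mul_pos (hd i) (hx0 i))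
      calc min (d i * x0 i) 1 * |u i| - (d i * x0 i + 1) ^ 2 / (d i * xs i)
          ≤ (d i * xs i) * Real.exp (u i) - (d i * x0 i) * u i := this
        _ = d i * (xs i * Real.exp (u i) - x0 i * u i) := by ring
    have h2 : ∑ i, (min (d i * x0 i) 1 * |u i| - (d i * x0 i + 1) ^ 2 / (d i * xs i)) ≤ φ u :=
      Finset.sum_le_sum (fun i _ => h1 i)
    rw [Finset.sum_sub_distrib] at h2
    have h3 : c * ‖u‖ ≤ ∑ i, min (d i * x0 i) 1 * |u i| := by
      have h4 : ‖u‖ ≤ ∑ i, |u i| := by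
        rw [pi_norm_le_iff_of_nonneg (by positivity)]
        intro i
        rw [Real.norm_eq_abs]
        exact Finset.single_le_sum (f := fun j => |u j|) (fun j _ => abs_nonneg _)
          (Finset.mem_univ i)
      calc c * ‖u‖ ≤ c * ∑ i, |u i| := by
            exact mul_le_mul_of_nonneg_left h4 hcpos.le
        _ = ∑ i, c * |u i| := by rw [Finset.mul_sum]
        _ ≤ ∑ i, min (d i * x0 i) 1 * |u i| := by
            apply Finset.sum_le_sum
            intro i _
            exact mul_le_mul_of_nonneg_right
              (Finset.inf'_le _ (Finset.mem_univ i)) (abs_nonneg _)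
    linarith
  have htends : Tendsto φ (cocompact (Fin m → ℝ)) atTop := by
    apply tendsto_atTop_mono hbound
    exact tendsto_atTop_add_const_right _ (-C)
      (tendsto_norm_cocompact_atTop.const_mul_atTop hcpos) |>.congr (fun u => by ring_nf)
  -- restrict to U and find a minimizer
  have hUclosed : IsClosed (U : Set (Fin m → ℝ)) := U.closed_of_finiteDimensional
  have hproper : Tendsto ((↑) : U → (Fin m → ℝ)) (cocompact U) (cocompact _) :=
    hUclosed.isClosedEmbedding_subtypeVal.tendsto_cocompact
  obtain ⟨⟨μ, hμU⟩, hmin⟩ := Continuous.exists_forall_le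
    (f := fun v : U => φ v) (hφcont.comp continuous_subtype_val) (htends.comp hproper)
  have hcrit : ∀ w ∈ U, ∑ i, (d i * (xs i * Real.exp (μ i) - x0 i)) * w i = 0 := by
    intro w hw
    set ψ : ℝ → ℝ :=
      fun t => ∑ i, d i * (xs i * Real.exp (μ i + t * w i) - x0 i * (μ i + t * w i)) with hψ
    have hψφ : ∀ t, ψ t = φ (μ + t • w) := by
      intro t; simp [hψ, hφ, Pi.add_apply, Pi.smul_apply, smul_eq_mul]
    have hloc : IsLocalMin ψ 0 := by
      apply Filter.Eventually.of_forall
      intro t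
      have h0 : ψ 0 = φ μ := by simp [hψ, hφ]
      rw [h0, hψφ t]
      exact hmin ⟨μ + t • w, U.add_mem hμU (U.smul_mem t hw)⟩
    have hder : HasDerivAt ψ (∑ i, (d i * (xs i * Real.exp (μ i) - x0 i)) * w i) 0 := by
      apply HasDerivAt.fun_sum
      intro i _
      have h1 : HasDerivAt (fun t : ℝ => μ i + t * w i) (w i) 0 :=
        ((hasDerivAt_mul_const (w i)).const_add (μ i)).congr_deriv (by simp)
      have h2 : HasDerivAt (fun t : ℝ => Real.exp (μ i + t * w i))
          (Real.exp (μ i + 0 * w i) * w i) 0 := h1.exp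
      have h3 : HasDerivAt
          (fun t : ℝ => d i * (xs i * Real.exp (μ i + t * w i) - x0 i * (μ i + t * w i)))
          (d i * (xs i * (Real.exp (μ i + 0 * w i) * w i) - x0 i * w i)) 0 :=
        (((h2.const_mul (xs i)).sub (h1.const_mul (x0 i))).const_mul (d i))
      refine h3.congr_deriv ?_
      simp; ring
    have := hloc.hasDerivAt_eq_zero hder
    exact this
  refine ⟨μ, ⟨hμU, hcrit⟩, ?_⟩
  -- uniqueness by strict monotonicity of exp
  rintro ν ⟨hνU, hν⟩
  have hdiff : (ν - μ) ∈ U := U.sub_mem hνU hμU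
  have h1 := hν (ν - μ) hdiff
  have h2 := hcrit (ν - μ) hdiff
  have hsum : ∑ i, (d i * xs i) * ((Real.exp (ν i) - Real.exp (μ i)) * (ν i - μ i)) = 0 := by
    have h3 : ∑ i, ((d i * (xs i * Real.exp (ν i) - x0 i)) * (ν - μ) i
        - (d i * (xs i * Real.exp (μ i) - x0 i)) * (ν - μ) i) = 0 := by
      rw [Finset.sum_sub_distrib, h1, h2]; ring
    rw [← h3]
    apply Finset.sum_congr rfl
    intro i _
    simp only [Pi.sub_apply]
    ring
  have hnn : ∀ i ∈ Finset.univ,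
      0 ≤ (d i * xs i) * ((Real.exp (ν i) - Real.exp (μ i)) * (ν i - μ i)) := by
    intro i _
    apply mul_nonneg (mul_pos (hd i) (hxs i)).le
    rcases le_total (μ i) (ν i) with h | h <;> nlinarith [Real.exp_le_exp.mpr h]
  have hzero := (Finset.sum_eq_zero_iff_of_nonneg hnn).mp hsum
  funext i
  have hi := hzero i (Finset.mem_univ i)
  by_contra hne
  have hds : 0 < d i * xs i := mul_pos (hd i) (hxs i)
  rcases lt_or_gt_of_ne hne with h | h
  · have hp : 0 < (Real.exp (μ i) - Real.exp (ν i)) * (μ i - ν i) :=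
      mul_pos (by linarith [Real.exp_lt_exp.mpr h]) (by linarith)
    nlinarith [mul_pos hds hp]
  · have hp : 0 < (Real.exp (ν i) - Real.exp (μ i)) * (ν i - μ i) :=
      mul_pos (by linarith [Real.exp_lt_exp.mpr h]) (by linarith)
    nlinarith [mul_pos hds hp]
end

section
/- Taking U = Ker(Ŝ^T) with the orthogonal complement of Ker(Ŝ^T) being Im(Ŝ): for every x̂_0 ∈ R^m_{>0} there exists a unique μ ∈ Ker(Ŝ^T) such that D_1(x̂^*·Exp(μ) − x̂_0) ∈ Im(Ŝ). -/
open Matrix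

lemma birch_dot_zero {m rh : ℕ} (Sh : Matrix (Fin m) (Fin rh) ℝ)
    {w v : Fin m → ℝ} (hw : w ∈ LinearMap.range Sh.mulVecLin)
    (hv : v ∈ LinearMap.ker Sh.transpose.mulVecLin) :
    v ⬝ᵥ w = 0 := by
  obtain ⟨u, rfl⟩ := hw
  have hv' : Sh.transpose.mulVec v = 0 := hv
  rw [Matrix.mulVecLin_apply, Matrix.dotProduct_mulVec, ← Matrix.mulVec_transpose, hv',
    zero_dotProduct]

lemma birch_mem_range {m rh : ℕ} (Sh : Matrix (Fin m) (Fin rh) ℝ)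
    {w : Fin m → ℝ} (hw : ∀ v ∈ LinearMap.ker Sh.transpose.mulVecLin, v ⬝ᵥ w = 0) :
    w ∈ LinearMap.range Sh.mulVecLin := by
  set L : (Fin m → ℝ) ≃ₗ[ℝ] EuclideanSpace ℝ (Fin m) :=
    (WithLp.linearEquiv 2 ℝ (Fin m → ℝ)).symm with hL
  set K' : Submodule ℝ (EuclideanSpace ℝ (Fin m)) :=
    (LinearMap.ker Sh.transpose.mulVecLin).map (L : (Fin m → ℝ) →ₗ[ℝ] EuclideanSpace ℝ (Fin m)) with hK'
  set R' : Submodule ℝ (EuclideanSpace ℝ (Fin m)) :=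
    (LinearMap.range Sh.mulVecLin).map (L : (Fin m → ℝ) →ₗ[ℝ] EuclideanSpace ℝ (Fin m)) with hR'
  have hle : R' ≤ K'ᗮ := by
    rintro x ⟨y, hy, rfl⟩
    rw [Submodule.mem_orthogonal]
    rintro z ⟨v, hv, rfl⟩
    have := birch_dot_zero Sh hy hv
    simpa [PiLp.inner_apply, RCLike.inner_apply, dotProduct, hL,
      WithLp.linearEquiv, mul_comm] using this
  have hrank : Module.finrank ℝ R' = Module.finrank ℝ (K'ᗮ : Submodule ℝ _) := by
    have h1 : Module.finrank ℝ R' = Sh.rank := LinearEquiv.finrank_map_eq L _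
    have h2 : Module.finrank ℝ K' + Module.finrank ℝ (K'ᗮ : Submodule ℝ _)
        = Module.finrank ℝ (EuclideanSpace ℝ (Fin m)) :=
      Submodule.finrank_add_finrank_orthogonal K'
    have h3 : Module.finrank ℝ K'
        = Module.finrank ℝ (LinearMap.ker Sh.transpose.mulVecLin) :=
      LinearEquiv.finrank_map_eq L _
    have h4 : Sh.transpose.rank + Module.finrank ℝ (LinearMap.ker Sh.transpose.mulVecLin) = m := by
      have := LinearMap.finrank_range_add_finrank_ker Sh.transpose.mulVecLin
      simpa [Matrix.rank] using this
    have h5 : Sh.transpose.rank = Sh.rank := Matrix.rank_transpose Sh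
    have h6 : Module.finrank ℝ (EuclideanSpace ℝ (Fin m)) = m := by simp
    omega
  have heq : R' = K'ᗮ := Submodule.eq_of_le_of_finrank_eq hle hrank
  have hwmem : L w ∈ K'ᗮ := by
    rw [Submodule.mem_orthogonal]
    rintro z ⟨v, hv, rfl⟩
    have := hw v hv
    simpa [PiLp.inner_apply, RCLike.inner_apply, dotProduct, hL,
      WithLp.linearEquiv, mul_comm] using this
  rw [← heq] at hwmem
  obtain ⟨y, hy, hyw⟩ := hwmem
  exact L.injective hyw ▸ hy

lemma birch_exp_lb (t : ℝ) (ht : 0 ≤ t) : t + t^2/4 ≤ Real.exp t := by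
  have h := Real.add_one_le_exp (t/2)
  have h2 : Real.exp (t/2) * Real.exp (t/2) = Real.exp t := by
    rw [← Real.exp_add]; ring_nf
  nlinarith [Real.exp_pos (t/2)]

lemma birch_coercive_aux (dd a b : ℝ) (hd : 0 < dd) (ha : 0 < a) (_hb : 0 < b) :
    ∃ C : ℝ, 0 ≤ C ∧ ∀ t : ℝ, dd * b * |t| - C ≤ dd * (a * Real.exp t - b * t) := by
  refine ⟨dd * (a - 2*b)^2 / a, by positivity, fun t => ?_⟩
  have hC : a * (dd * (a - 2*b)^2 / a) = dd * (a - 2*b)^2 := by field_simp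
  rcases le_or_gt 0 t with ht | ht
  · rw [abs_of_nonneg ht]
    have h := birch_exp_lb t ht
    nlinarith [mul_le_mul_of_nonneg_left h (by positivity : (0:ℝ) ≤ dd*a*a),
      mul_nonneg hd.le (sq_nonneg (a*t/2 + (a-2*b))), ha, hC]
  · rw [abs_of_neg ht]
    have h6 : (0:ℝ) < Real.exp t := Real.exp_pos t
    have h7 : 0 ≤ dd * (a - 2*b)^2 / a := by positivity
    nlinarith [mul_pos (mul_pos hd ha) h6]

/-- For every positive `x̂₀` there is a unique `μ ∈ Ker(Ŝᵀ)` such that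
`D₁(x̂*·Exp(μ) − x̂₀) ∈ Im(Ŝ)`. -/
theorem unique_mu_in_kernel_with_gradient_in_image
    (m rh : ℕ) (Sh : Matrix (Fin m) (Fin rh) ℝ)
    (xs d : Fin m → ℝ) (hxs : ∀ i, 0 < xs i) (hd : ∀ i, 0 < d i)
    (x0 : Fin m → ℝ) (hx0 : ∀ i, 0 < x0 i) :
    ∃! μ : Fin m → ℝ, μ ∈ LinearMap.ker Sh.transpose.mulVecLin ∧
      (fun i => d i * (xs i * Real.exp (μ i) - x0 i)) ∈
        LinearMap.range Sh.mulVecLin := by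
  classical
  -- Uniqueness
  have huniq : ∀ μ ν : Fin m → ℝ,
      μ ∈ LinearMap.ker Sh.transpose.mulVecLin →
      ν ∈ LinearMap.ker Sh.transpose.mulVecLin →
      (fun i => d i * (xs i * Real.exp (μ i) - x0 i)) ∈ LinearMap.range Sh.mulVecLin →
      (fun i => d i * (xs i * Real.exp (ν i) - x0 i)) ∈ LinearMap.range Sh.mulVecLin →
      μ = ν := by
    intro μ ν hμk hνk hμr hνr
    have hker : μ - ν ∈ LinearMap.ker Sh.transpose.mulVecLin := sub_mem hμk hνk
    have hrng : (fun i => d i * (xs i * Real.exp (μ i) - x0 i)) -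
        (fun i => d i * (xs i * Real.exp (ν i) - x0 i)) ∈ LinearMap.range Sh.mulVecLin :=
      sub_mem hμr hνr
    have hdot := birch_dot_zero Sh hrng hker
    have hsum : ∑ i, (μ i - ν i) * (d i * xs i * (Real.exp (μ i) - Real.exp (ν i))) = 0 := by
      rw [← hdot, dotProduct]
      refine Finset.sum_congr rfl fun i _ => ?_
      simp only [Pi.sub_apply]
      ring
    have hterm : ∀ i ∈ Finset.univ, 0 ≤ (μ i - ν i) * (d i * xs i * (Real.exp (μ i) - Real.exp (ν i))) := by
      intro i _
      have hdx := mul_pos (hd i) (hxs i)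
      rcases le_total (μ i) (ν i) with h | h
      · have he : Real.exp (μ i) ≤ Real.exp (ν i) := Real.exp_le_exp.mpr h
        exact mul_nonneg_of_nonpos_of_nonpos (by linarith)
          (mul_nonpos_of_nonneg_of_nonpos hdx.le (by linarith))
      · have he : Real.exp (ν i) ≤ Real.exp (μ i) := Real.exp_le_exp.mpr h
        exact mul_nonneg (by linarith) (mul_nonneg hdx.le (by linarith))
    have hall := (Finset.sum_eq_zero_iff_of_nonneg hterm).mp hsum
    funext i
    by_contra hne
    have h0 := hall i (Finset.mem_univ i)
    have hdx := mul_pos (hd i) (hxs i)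
    rcases lt_or_gt_of_ne hne with h | h
    · have he : Real.exp (μ i) < Real.exp (ν i) := Real.exp_lt_exp.mpr h
      have := mul_pos_of_neg_of_neg (a := μ i - ν i)
        (b := d i * xs i * (Real.exp (μ i) - Real.exp (ν i)))
        (by linarith) (mul_neg_of_pos_of_neg hdx (by linarith))
      linarith
    · have he : Real.exp (ν i) < Real.exp (μ i) := Real.exp_lt_exp.mpr h
      have := mul_pos (a := μ i - ν i)
        (b := d i * xs i * (Real.exp (μ i) - Real.exp (ν i)))
        (by linarith) (mul_pos hdx (by linarith))
      linarith
  rcases Nat.eq_zero_or_pos m with hm | hm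
  · subst hm
    refine ⟨0, ⟨Submodule.zero_mem _, ⟨0, funext fun i => i.elim0⟩⟩,
      fun y _ => funext fun i => i.elim0⟩
  -- Existence via minimization
  haveI : Nonempty (Fin m) := Fin.pos_iff_nonempty.mp hm
  set K := LinearMap.ker Sh.transpose.mulVecLin with hK
  choose C hC0 hCle using fun i => birch_coercive_aux (d i) (xs i) (x0 i) (hd i) (hxs i) (hx0 i)
  set ε : ℝ := Finset.univ.inf' Finset.univ_nonempty (fun i => d i * x0 i) with hε
  have hεpos : 0 < ε := by
    rw [hε, Finset.lt_inf'_iff]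
    exact fun i _ => mul_pos (hd i) (hx0 i)
  set Ctot : ℝ := ∑ i, C i with hCtot
  set f : K → ℝ := fun μ => ∑ i, d i * (xs i * Real.exp (μ.1 i) - x0 i * μ.1 i) with hf
  have hcont : Continuous f := by
    apply continuous_finset_sum
    intro i _
    have h1 : Continuous fun μ : K => μ.1 i := (continuous_apply i).comp continuous_subtype_val
    exact continuous_const.mul ((continuous_const.mul (Real.continuous_exp.comp h1)).sub
      (continuous_const.mul h1))
  have hlb : ∀ μ : K, ε * ‖μ‖ - Ctot ≤ f μ := by
    intro μ
    have h1 : ∀ i ∈ Finset.univ, ε * |μ.1 i| - C i ≤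
        d i * (xs i * Real.exp (μ.1 i) - x0 i * μ.1 i) := by
      intro i _
      have h2 : ε ≤ d i * x0 i := Finset.inf'_le _ (Finset.mem_univ i)
      have h3 := hCle i (μ.1 i)
      nlinarith [abs_nonneg (μ.1 i)]
    have h4 : ‖μ‖ ≤ ∑ i, |μ.1 i| := by
      have h5 : ‖μ.1‖ ≤ ∑ i, |μ.1 i| := by
        refine (pi_norm_le_iff_of_nonneg (by positivity)).mpr fun i => ?_
        rw [Real.norm_eq_abs]
        exact Finset.single_le_sum (f := fun j => |μ.1 j|) (fun j _ => abs_nonneg _)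
          (Finset.mem_univ i)
      simpa using h5
    calc ε * ‖μ‖ - Ctot ≤ ε * (∑ i, |μ.1 i|) - Ctot := by
          nlinarith
      _ = ∑ i, (ε * |μ.1 i| - C i) := by
          rw [Finset.mul_sum, Finset.sum_sub_distrib]
      _ ≤ f μ := Finset.sum_le_sum h1
  have hcoer : Filter.Tendsto f (Filter.cocompact K) Filter.atTop := by
    apply Filter.tendsto_atTop_mono hlb
    simp only [sub_eq_add_neg]
    apply Filter.tendsto_atTop_add_const_right
    exact Filter.Tendsto.const_mul_atTop hεpos tendsto_norm_cocompact_atTop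
  obtain ⟨μ0, hmin⟩ := hcont.exists_forall_le hcoer
  set w : Fin m → ℝ := fun i => d i * (xs i * Real.exp (μ0.1 i) - x0 i) with hw
  have hcrit : ∀ v ∈ K, v ⬝ᵥ w = 0 := by
    intro v hv
    set φ : ℝ → ℝ := fun t => ∑ i, d i *
      (xs i * Real.exp (μ0.1 i + t * v i) - x0 i * (μ0.1 i + t * v i)) with hφ
    have hφf : ∀ t : ℝ, φ t = f (μ0 + t • (⟨v, hv⟩ : K)) := by
      intro t
      simp [hφ, hf]
    have hder : HasDerivAt φ
        (∑ i, d i * (xs i * (Real.exp (μ0.1 i + 0 * v i) * v i) - x0 i * v i)) 0 := by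
      apply HasDerivAt.fun_sum
      intro i _
      have hin : HasDerivAt (fun t : ℝ => μ0.1 i + t * v i) (v i) 0 := by
        simpa using (hasDerivAt_mul_const (v i)).const_add (μ0.1 i)
      exact (((hin.exp.const_mul (xs i)).sub (hin.const_mul (x0 i))).const_mul (d i))
    have hlocmin : IsLocalMin φ 0 := by
      refine Filter.Eventually.of_forall fun t => ?_
      rw [hφf t, hφf 0]
      have h7 : μ0 + (0:ℝ) • (⟨v, hv⟩ : K) = μ0 := by simp
      rw [h7]
      exact hmin _
    have h8 := hlocmin.deriv_eq_zero
    rw [hder.deriv] at h8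
    rw [dotProduct, ← h8]
    refine Finset.sum_congr rfl fun i _ => ?_
    simp only [hw, zero_mul, add_zero]
    ring
  exact ⟨μ0.1, ⟨μ0.2, birch_mem_range Sh hcrit⟩,
    fun y hy => huniq y μ0.1 hy.1 μ0.2 hy.2 (birch_mem_range Sh hcrit)⟩
end
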